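/- Let (𝔘, G, α) be a C*-dynamical system and ω a state satisfying both two-sided clustering lim_i (ω(α_{g^i}(A)B) − ω(α_{g^i}A)ω(B)) = 0 and the three-element clustering property lim_i (ω(A α_{g^i}(B) C) − ω(α_{g^i}B)ω(AC)) = 0 for all A, B, C ∈ 𝔘. Then for every n ≥ 2, every position 1 ≤ m ≤ n, and all A_1,...,A_n ∈ 𝔘, lim_i κ_n(A_1, ..., α_{g^i}(A_m), ..., A_n) = 0, and the same holds for classical cumulants c_n. -/

import Mathlib

open scoped Classical
open Filter Topology

noncomputable section

/-- `π` is a set-partition of the finite set `S ⊆ ℕ`: a collection of nonempty subsets of `S`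
such that every element of `S` lies in exactly one of them. -/
def IsSetPartition (S : Finset ℕ) (π : Finset (Finset ℕ)) : Prop :=
  (∀ V ∈ π, V ⊆ S) ∧ (∀ V ∈ π, V.Nonempty) ∧ ∀ a ∈ S, ∃! V, V ∈ π ∧ a ∈ V

/-- The finset of all set-partitions of `S`. -/
def setPartitions (S : Finset ℕ) : Finset (Finset (Finset ℕ)) :=
  S.powerset.powerset.filter (IsSetPartition S)

/-- A family of blocks is non-crossing if there are no `a < b < c < d` with `a, c` in one
block and `b, d` in a different block. -/
def IsNonCrossing (π : Finset (Finset ℕ)) : Prop :=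
  ¬ ∃ a b c d : ℕ, a < b ∧ b < c ∧ c < d ∧
      ∃ V ∈ π, ∃ W ∈ π, V ≠ W ∧ a ∈ V ∧ c ∈ V ∧ b ∈ W ∧ d ∈ W

/-- The finset of all non-crossing partitions of `S`. -/
def ncPartitions (S : Finset ℕ) : Finset (Finset (Finset ℕ)) :=
  (setPartitions S).filter IsNonCrossing

variable {𝔘 : Type*}

/-- The ordered list `A_{i_1}, …, A_{i_s}` of observables indexed by `V = {i_1 < ⋯ < i_s}`. -/
def blockList (A : ℕ → 𝔘) (V : Finset ℕ) : List 𝔘 :=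
  (V.sort (· ≤ ·)).map A

/-- The ordered product `A_{i_1} ⋯ A_{i_s}` over the block `V = {i_1 < ⋯ < i_s}`. -/
def blockProd [Monoid 𝔘] (A : ℕ → 𝔘) (V : Finset ℕ) : 𝔘 :=
  (blockList A V).prod

/-- The joint classical cumulant of `ω` of the observables `A_i`, `i ∈ S` (order preserved):
`c(S) = ∑_{π ∈ P(S)} (-1)^{|π|-1}(|π|-1)! ∏_{V ∈ π} ω(∏_{i ∈ V} A_i)`. -/
def cumulant [Monoid 𝔘] (ω : 𝔘 → ℂ) (A : ℕ → 𝔘) (S : Finset ℕ) : ℂ :=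
  ∑ π ∈ setPartitions S,
    (-1 : ℂ) ^ (π.card - 1) * ((π.card - 1).factorial : ℂ) * ∏ V ∈ π, ω (blockProd A V)

/-- `κ` (as a function of the ordered list of observables) is the family of free cumulants of
`ω`: it satisfies the moments-to-free-cumulants formula over non-crossing partitions. -/
def IsFreeCumulantFamily [Monoid 𝔘] (ω : 𝔘 → ℂ) (κ : List 𝔘 → ℂ) : Prop :=
  ∀ (A : ℕ → 𝔘) (S : Finset ℕ), S.Nonempty →
    ω (blockProd A S) = ∑ π ∈ ncPartitions S, ∏ V ∈ π, κ (blockList A V)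

/-- A state on a unital C*-algebra: a positive unital linear functional. -/
structure IsState [NormedRing 𝔘] [StarRing 𝔘] [NormedAlgebra ℂ 𝔘] (ω : 𝔘 →ₗ[ℂ] ℂ) : Prop where
  unital : ω 1 = 1
  positive : ∀ a : 𝔘, 0 ≤ (ω (star a * a)).re ∧ (ω (star a * a)).im = 0

/-- `α` is a representation of the group `G` by *-automorphisms. -/
def IsStarAutoRep {G : Type*} [Monoid G] [Ring 𝔘] [Algebra ℂ 𝔘] [StarRing 𝔘]
    (α : G → 𝔘 ≃⋆ₐ[ℂ] 𝔘) : Prop :=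
  ∀ (g h : G) (x : 𝔘), α (g * h) x = α g (α h x)

section SortLemmas

variable {𝔘 : Type*}

lemma sort_union_of_lt {S T : Finset ℕ} (h : ∀ a ∈ S, ∀ b ∈ T, a < b) :
    (S ∪ T).sort (· ≤ ·) = S.sort (· ≤ ·) ++ T.sort (· ≤ ·) := by
  have hdisj : Disjoint S T := by
    rw [Finset.disjoint_left]
    intro a haS haT
    exact lt_irrefl a (h a haS a haT)
  refine (fun hp h1 h2 => List.Perm.eq_of_pairwise' (r := (· ≤ · : ℕ → ℕ → Prop)) h1 h2 hp) ?_ ?_ ?_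
  · rw [← Multiset.coe_eq_coe, ← Multiset.coe_add,
      Finset.sort_eq, Finset.sort_eq, Finset.sort_eq,
      ← Finset.disjUnion_eq_union S T hdisj]
    rfl
  · exact Finset.pairwise_sort _ _
  · rw [List.pairwise_append]
    refine ⟨Finset.pairwise_sort _ _, Finset.pairwise_sort _ _, ?_⟩
    intro a ha b hb
    exact le_of_lt (h a (Finset.mem_sort (α := ℕ) (· ≤ ·) |>.mp ha) b
      (Finset.mem_sort (α := ℕ) (· ≤ ·) |>.mp hb))

lemma blockList_union {A : ℕ → 𝔘} {S T : Finset ℕ} (h : ∀ a ∈ S, ∀ b ∈ T, a < b) :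
    blockList A (S ∪ T) = blockList A S ++ blockList A T := by
  unfold blockList
  rw [sort_union_of_lt h, List.map_append]

lemma filter_union_decomp {V : Finset ℕ} {m : ℕ} (hm : m ∈ V) :
    V = V.filter (· < m) ∪ insert m (V.filter (m < ·)) := by
  ext a
  simp only [Finset.mem_union, Finset.mem_filter, Finset.mem_insert]
  constructor
  · intro ha
    rcases lt_trichotomy a m with h | h | h
    · exact Or.inl ⟨ha, h⟩
    · exact Or.inr (Or.inl h)
    · exact Or.inr (Or.inr ⟨ha, h⟩)
  · rintro (⟨ha, _⟩ | rfl | ⟨ha, _⟩) <;> first | exact ha | exact hm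

lemma erase_union_decomp (V : Finset ℕ) (m : ℕ) :
    V.erase m = V.filter (· < m) ∪ V.filter (m < ·) := by
  ext a
  simp only [Finset.mem_erase, Finset.mem_union, Finset.mem_filter]
  constructor
  · rintro ⟨hne, ha⟩
    rcases lt_or_gt_of_ne hne with h | h
    · exact Or.inl ⟨ha, h⟩
    · exact Or.inr ⟨ha, h⟩
  · rintro (⟨ha, h⟩ | ⟨ha, h⟩)
    · exact ⟨ne_of_lt h, ha⟩
    · exact ⟨ne_of_gt h, ha⟩

lemma blockList_singleton (A : ℕ → 𝔘) (j : ℕ) : blockList A {j} = [A j] := by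
  unfold blockList
  rw [Finset.sort_singleton]
  rfl

lemma blockList_split {A : ℕ → 𝔘} {V : Finset ℕ} {m : ℕ} (hm : m ∈ V) :
    blockList A V = blockList A (V.filter (· < m)) ++ A m :: blockList A (V.filter (m < ·)) := by
  conv_lhs => rw [filter_union_decomp hm]
  have h1 : ∀ a ∈ V.filter (· < m), ∀ b ∈ insert m (V.filter (m < ·)), a < b := by
    intro a ha b hb
    have ha' := (Finset.mem_filter.mp ha).2
    rcases Finset.mem_insert.mp hb with rfl | hb'
    · exact ha'
    · exact ha'.trans (Finset.mem_filter.mp hb').2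
  have h2 : ∀ a ∈ ({m} : Finset ℕ), ∀ b ∈ V.filter (m < ·), a < b := by
    intro a ha b hb
    simp only [Finset.mem_singleton] at ha
    subst ha
    exact (Finset.mem_filter.mp hb).2
  have hins : insert m (V.filter (m < ·)) = {m} ∪ V.filter (m < ·) := by
    rw [Finset.insert_eq]
  rw [blockList_union h1, hins, blockList_union h2, blockList_singleton]
  rfl

lemma blockProd_split [Monoid 𝔘] {A : ℕ → 𝔘} {V : Finset ℕ} {m : ℕ} (hm : m ∈ V) :
    blockProd A V = blockProd A (V.filter (· < m)) * A m * blockProd A (V.filter (m < ·)) := by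
  unfold blockProd
  rw [blockList_split hm, List.prod_append, List.prod_cons, mul_assoc]

lemma blockProd_erase [Monoid 𝔘] (A : ℕ → 𝔘) (V : Finset ℕ) (m : ℕ) :
    blockProd A (V.erase m) = blockProd A (V.filter (· < m)) * blockProd A (V.filter (m < ·)) := by
  unfold blockProd
  rw [erase_union_decomp, blockList_union, List.prod_append]
  intro a ha b hb
  exact lt_trans (Finset.mem_filter.mp ha).2 (Finset.mem_filter.mp hb).2

lemma blockList_update_of_not_mem {A : ℕ → 𝔘} {m : ℕ} {x : 𝔘} {V : Finset ℕ} (hm : m ∉ V) :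
    blockList (Function.update A m x) V = blockList A V := by
  unfold blockList
  apply List.map_congr_left
  intro a ha
  have : a ≠ m := by
    rintro rfl
    exact hm ((Finset.mem_sort (α := ℕ) (· ≤ ·)).mp ha)
  exact Function.update_of_ne this x A

lemma blockProd_update_of_not_mem [Monoid 𝔘] {A : ℕ → 𝔘} {m : ℕ} {x : 𝔘} {V : Finset ℕ}
    (hm : m ∉ V) :
    blockProd (Function.update A m x) V = blockProd A V := by
  unfold blockProd; rw [blockList_update_of_not_mem hm]

lemma not_mem_filter_lt (V : Finset ℕ) (m : ℕ) : m ∉ V.filter (· < m) := by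
  simp [Finset.mem_filter]

lemma not_mem_filter_gt (V : Finset ℕ) (m : ℕ) : m ∉ V.filter (m < ·) := by
  simp [Finset.mem_filter]

lemma blockProd_split_update [Monoid 𝔘] {A : ℕ → 𝔘} {m : ℕ} {x : 𝔘} {V : Finset ℕ} (hm : m ∈ V) :
    blockProd (Function.update A m x) V =
      blockProd A (V.filter (· < m)) * x * blockProd A (V.filter (m < ·)) := by
  rw [blockProd_split hm, blockProd_update_of_not_mem (not_mem_filter_lt V m),
    blockProd_update_of_not_mem (not_mem_filter_gt V m), Function.update_self]

end SortLemmas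

section PartitionLemmas

lemma mem_setPartitions {S : Finset ℕ} {π : Finset (Finset ℕ)} :
    π ∈ setPartitions S ↔ IsSetPartition S π := by
  unfold setPartitions
  rw [Finset.mem_filter]
  constructor
  · exact fun h => h.2
  · intro h
    refine ⟨?_, h⟩
    rw [Finset.mem_powerset]
    intro V hV
    rw [Finset.mem_powerset]
    exact h.1 V hV

lemma mem_ncPartitions {S : Finset ℕ} {π : Finset (Finset ℕ)} :
    π ∈ ncPartitions S ↔ IsSetPartition S π ∧ IsNonCrossing π := by
  unfold ncPartitions
  rw [Finset.mem_filter, mem_setPartitions]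

lemma block_eq_block {S : Finset ℕ} {π : Finset (Finset ℕ)} (hπ : IsSetPartition S π)
    {V W : Finset ℕ} {a : ℕ} (hV : V ∈ π) (hW : W ∈ π) (haV : a ∈ V) (haW : a ∈ W) :
    V = W := by
  have haS : a ∈ S := hπ.1 V hV haV
  obtain ⟨U, _, hu⟩ := hπ.2.2 a haS
  rw [hu V ⟨hV, haV⟩, hu W ⟨hW, haW⟩]

/-- The one-block partition. -/
lemma oneBlock_mem_ncPartitions {S : Finset ℕ} (hS : S.Nonempty) :
    ({S} : Finset (Finset ℕ)) ∈ ncPartitions S := by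
  rw [mem_ncPartitions]
  refine ⟨⟨?_, ?_, ?_⟩, ?_⟩
  · intro V hV; rw [Finset.mem_singleton] at hV; subst hV; exact subset_rfl
  · intro V hV; rw [Finset.mem_singleton] at hV; subst hV; exact hS
  · intro a ha
    refine ⟨S, ⟨Finset.mem_singleton_self S, ha⟩, ?_⟩
    intro V hV
    exact Finset.mem_singleton.mp hV.1
  · rintro ⟨a, b, c, d, _, _, _, V, hV, W, hW, hVW, _⟩
    rw [Finset.mem_singleton] at hV hW
    exact hVW (hV.trans hW.symm)

lemma block_ne_of_ne_oneBlock {S : Finset ℕ} {π : Finset (Finset ℕ)}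
    (hπ : IsSetPartition S π) (hne : π ≠ {S}) {V : Finset ℕ} (hV : V ∈ π) : V ≠ S := by
  rintro rfl
  apply hne
  apply Finset.eq_singleton_iff_unique_mem.mpr
  refine ⟨hV, ?_⟩
  intro W hW
  obtain ⟨a, ha⟩ := hπ.2.1 W hW
  exact (block_eq_block hπ hW hV ha (hπ.1 W hW ha)).symm ▸ rfl

lemma card_lt_of_ne_oneBlock {S : Finset ℕ} {π : Finset (Finset ℕ)}
    (hπ : IsSetPartition S π) (hne : π ≠ {S}) {V : Finset ℕ} (hV : V ∈ π) : V.card < S.card :=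
  Finset.card_lt_card (Finset.ssubset_iff_subset_ne.mpr
    ⟨hπ.1 V hV, block_ne_of_ne_oneBlock hπ hne hV⟩)

lemma not_mem_of_mem_erase_block {S : Finset ℕ} {π : Finset (Finset ℕ)}
    (hπ : IsSetPartition S π) {m : ℕ} {Vm V : Finset ℕ} (hVm : Vm ∈ π) (hmVm : m ∈ Vm)
    (hV : V ∈ π.erase Vm) : m ∉ V := by
  intro hmV
  have := block_eq_block hπ (Finset.mem_of_mem_erase hV) hVm hmV hmVm
  exact (Finset.ne_of_mem_erase hV) this

/-- Inserting the singleton `{m}` into a partition of `S.erase m`. -/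
lemma insert_singleton_partition {S : Finset ℕ} {σ : Finset (Finset ℕ)} {m : ℕ}
    (hσ : IsSetPartition (S.erase m) σ) (hm : m ∈ S) :
    IsSetPartition S (insert {m} σ) := by
  have hnm : ∀ V ∈ σ, m ∉ V := fun V hV hmV =>
    (Finset.notMem_erase m S) (hσ.1 V hV hmV)
  refine ⟨?_, ?_, ?_⟩
  · intro V hV
    rcases Finset.mem_insert.mp hV with rfl | hV'
    · exact Finset.singleton_subset_iff.mpr hm
    · exact (hσ.1 V hV').trans (Finset.erase_subset m S)
  · intro V hV
    rcases Finset.mem_insert.mp hV with rfl | hV'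
    · exact Finset.singleton_nonempty m
    · exact hσ.2.1 V hV'
  · intro a ha
    by_cases ham : a = m
    · subst ham
      refine ⟨{a}, ⟨Finset.mem_insert_self _ _, Finset.mem_singleton_self a⟩, ?_⟩
      rintro V ⟨hV, haV⟩
      rcases Finset.mem_insert.mp hV with rfl | hV'
      · rfl
      · exact absurd haV (hnm V hV')
    · obtain ⟨V, ⟨hVσ, haV⟩, hu⟩ := hσ.2.2 a (Finset.mem_erase.mpr ⟨ham, ha⟩)
      refine ⟨V, ⟨Finset.mem_insert_of_mem hVσ, haV⟩, ?_⟩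
      rintro W ⟨hW, haW⟩
      rcases Finset.mem_insert.mp hW with rfl | hW'
      · exact absurd (Finset.mem_singleton.mp haW) ham
      · exact hu W ⟨hW', haW⟩

lemma singleton_not_mem {S : Finset ℕ} {σ : Finset (Finset ℕ)} {m : ℕ}
    (hσ : IsSetPartition (S.erase m) σ) : ({m} : Finset ℕ) ∉ σ := by
  intro h
  exact (Finset.notMem_erase m S) (hσ.1 {m} h (Finset.mem_singleton_self m))

lemma insert_singleton_nc {σ : Finset (Finset ℕ)} {m : ℕ}
    (hnc : IsNonCrossing σ) : IsNonCrossing (insert {m} σ) := by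
  rintro ⟨a, b, c, d, hab, hbc, hcd, V, hV, W, hW, hVW, haV, hcV, hbW, hdW⟩
  rcases Finset.mem_insert.mp hV with rfl | hV'
  · rw [Finset.mem_singleton] at haV hcV
    exact absurd (haV.trans hcV.symm) (ne_of_lt (hab.trans hbc))
  · rcases Finset.mem_insert.mp hW with rfl | hW'
    · rw [Finset.mem_singleton] at hbW hdW
      exact absurd (hbW.trans hdW.symm) (ne_of_lt (hbc.trans hcd))
    · exact hnc ⟨a, b, c, d, hab, hbc, hcd, V, hV', W, hW', hVW, haV, hcV, hbW, hdW⟩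

lemma erase_singleton_partition {S : Finset ℕ} {π : Finset (Finset ℕ)} {m : ℕ}
    (hπ : IsSetPartition S π) (hm : ({m} : Finset ℕ) ∈ π) :
    IsSetPartition (S.erase m) (π.erase {m}) := by
  have hmS : m ∈ S := hπ.1 {m} hm (Finset.mem_singleton_self m)
  refine ⟨?_, ?_, ?_⟩
  · intro V hV
    intro a haV
    have hVπ := Finset.mem_of_mem_erase hV
    refine Finset.mem_erase.mpr ⟨?_, hπ.1 V hVπ haV⟩
    rintro rfl
    exact (Finset.ne_of_mem_erase hV)
      (block_eq_block hπ hVπ hm haV (Finset.mem_singleton_self a))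
  · exact fun V hV => hπ.2.1 V (Finset.mem_of_mem_erase hV)
  · intro a ha
    obtain ⟨ham, haS⟩ := Finset.mem_erase.mp ha
    obtain ⟨V, ⟨hVπ, haV⟩, hu⟩ := hπ.2.2 a haS
    have hVne : V ≠ {m} := by
      rintro rfl
      exact ham (Finset.mem_singleton.mp haV)
    refine ⟨V, ⟨Finset.mem_erase.mpr ⟨hVne, hVπ⟩, haV⟩, ?_⟩
    rintro W ⟨hW, haW⟩
    exact hu W ⟨Finset.mem_of_mem_erase hW, haW⟩

lemma nc_of_subset {π σ : Finset (Finset ℕ)} (h : σ ⊆ π) (hnc : IsNonCrossing π) :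
    IsNonCrossing σ := by
  rintro ⟨a, b, c, d, hab, hbc, hcd, V, hV, W, hW, hrest⟩
  exact hnc ⟨a, b, c, d, hab, hbc, hcd, V, h hV, W, h hW, hrest⟩

lemma card_pos_of_partition {S : Finset ℕ} {σ : Finset (Finset ℕ)}
    (hσ : IsSetPartition S σ) (hS : S.Nonempty) : 1 ≤ σ.card := by
  obtain ⟨a, ha⟩ := hS
  obtain ⟨V, ⟨hV, _⟩, _⟩ := hσ.2.2 a ha
  exact Finset.card_pos.mpr ⟨V, hV⟩

lemma setPartitions_singleton (j : ℕ) :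
    setPartitions ({j} : Finset ℕ) = {{{j}}} := by
  ext π
  rw [mem_setPartitions, Finset.mem_singleton]
  constructor
  · intro hπ
    obtain ⟨V, ⟨hV, hjV⟩, _⟩ := hπ.2.2 j (Finset.mem_singleton_self j)
    have hVj : V = {j} := by
      apply Finset.Subset.antisymm (hπ.1 V hV)
      exact Finset.singleton_subset_iff.mpr hjV
    subst hVj
    apply Finset.eq_singleton_iff_unique_mem.mpr
    refine ⟨hV, ?_⟩
    intro W hW
    obtain ⟨a, haW⟩ := hπ.2.1 W hW
    have haj : a = j := Finset.mem_singleton.mp (hπ.1 W hW haW)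
    subst haj
    exact block_eq_block hπ hW hV haW hjV
  · rintro rfl
    exact (mem_ncPartitions.mp (oneBlock_mem_ncPartitions
      (Finset.singleton_nonempty j))).1

lemma ncPartitions_singleton (j : ℕ) :
    ncPartitions ({j} : Finset ℕ) = {{{j}}} := by
  ext π
  rw [mem_ncPartitions, Finset.mem_singleton]
  constructor
  · intro hπ
    have := setPartitions_singleton j
    have h2 : π ∈ setPartitions ({j} : Finset ℕ) := mem_setPartitions.mpr hπ.1
    rw [this, Finset.mem_singleton] at h2
    exact h2
  · rintro rfl
    exact mem_ncPartitions.mp (oneBlock_mem_ncPartitions (Finset.singleton_nonempty j))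

end PartitionLemmas

section FreeAux

variable {𝔘 : Type*}

lemma kappa_singleton [Monoid 𝔘] {ω : 𝔘 → ℂ} {κ : List 𝔘 → ℂ}
    (hκ : IsFreeCumulantFamily ω κ) (y : 𝔘) : κ [y] = ω y := by
  have h := hκ (fun _ => y) {0} (Finset.singleton_nonempty 0)
  rw [ncPartitions_singleton, Finset.sum_singleton, Finset.prod_singleton,
    blockList_singleton] at h
  have hbp : blockProd (fun _ => y) ({0} : Finset ℕ) = y := by
    unfold blockProd
    rw [blockList_singleton, List.prod_singleton]
  rw [hbp] at h
  exact h.symm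

/-- Reindex the sum over non-crossing partitions containing the singleton `{m}`. -/
lemma sum_nc_singleton_block {S : Finset ℕ} {m : ℕ} (hm : m ∈ S) (h2 : 2 ≤ S.card)
    (F : Finset ℕ → ℂ) :
    ∑ π ∈ ((ncPartitions S).erase {S}).filter (fun π => ({m} : Finset ℕ) ∈ π),
        ∏ V ∈ π, F V
      = ∑ σ ∈ ncPartitions (S.erase m), (F {m} * ∏ V ∈ σ, F V) := by
  have hfe : ((ncPartitions S).erase {S}).filter (fun π => ({m} : Finset ℕ) ∈ π)
      = (ncPartitions S).filter (fun π => ({m} : Finset ℕ) ∈ π) := by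
    ext π
    simp only [Finset.mem_filter, Finset.mem_erase]
    constructor
    · rintro ⟨⟨_, h1⟩, h2⟩; exact ⟨h1, h2⟩
    · rintro ⟨h1, hmem⟩
      refine ⟨⟨?_, h1⟩, hmem⟩
      rintro rfl
      rw [Finset.mem_singleton] at hmem
      rw [← hmem] at h2
      simp at h2
  rw [hfe]
  refine Finset.sum_nbij' (fun π => π.erase {m}) (fun σ => insert {m} σ) ?_ ?_ ?_ ?_ ?_
  · intro π hπ
    obtain ⟨hnc, hmem⟩ := Finset.mem_filter.mp hπ
    obtain ⟨hsp, hncr⟩ := mem_ncPartitions.mp hnc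
    exact mem_ncPartitions.mpr ⟨erase_singleton_partition hsp hmem,
      nc_of_subset (Finset.erase_subset _ _) hncr⟩
  · intro σ hσ
    obtain ⟨hsp, hncr⟩ := mem_ncPartitions.mp hσ
    refine Finset.mem_filter.mpr ⟨mem_ncPartitions.mpr
      ⟨insert_singleton_partition hsp hm, insert_singleton_nc hncr⟩, Finset.mem_insert_self _ _⟩
  · intro π hπ
    exact Finset.insert_erase (Finset.mem_filter.mp hπ).2
  · intro σ hσ
    exact Finset.erase_insert (singleton_not_mem (mem_ncPartitions.mp hσ).1)
  · intro π hπ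
    obtain ⟨_, hmem⟩ := Finset.mem_filter.mp hπ
    exact (Finset.mul_prod_erase π F hmem).symm

end FreeAux

section FreeMain

variable {𝔘 ι : Type*}

lemma free_main [Monoid 𝔘] (ω : 𝔘 → ℂ)
    (l : Filter ι) (κ : List 𝔘 → ℂ) (hκ : IsFreeCumulantFamily ω κ)
    (A : ℕ → 𝔘) (m : ℕ) (x : ι → 𝔘)
    (hx : ∀ P Q : 𝔘, Filter.Tendsto
      (fun i => ω (P * x i * Q) - ω (x i) * ω (P * Q)) l (𝓝 0)) :
    ∀ S : Finset ℕ, m ∈ S → 2 ≤ S.card →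
      Filter.Tendsto (fun i => κ (blockList (Function.update A m (x i)) S)) l (𝓝 0) := by
  intro S
  induction S using Finset.strongInduction with
  | _ S IH =>
  intro hm h2
  set A' : ι → ℕ → 𝔘 := fun i => Function.update A m (x i) with hA'
  have hS1 : S.Nonempty := Finset.card_pos.mp (by omega)
  have hSm : (S.erase m).Nonempty := by
    rw [← Finset.card_pos, Finset.card_erase_of_mem hm]
    omega
  set P := blockProd A (S.filter (· < m)) with hP
  set Q := blockProd A (S.filter (m < ·)) with hQ
  set T₂ := ((ncPartitions S).erase {S}).filter (fun π => ({m} : Finset ℕ) ∉ π) with hT₂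
  have key : ∀ i, κ (blockList (A' i) S) =
      (ω (P * x i * Q) - ω (x i) * ω (P * Q)) -
        ∑ π ∈ T₂, ∏ V ∈ π, κ (blockList (A' i) V) := by
    intro i
    have hmom := hκ (A' i) S hS1
    have hone : ({S} : Finset (Finset ℕ)) ∈ ncPartitions S := oneBlock_mem_ncPartitions hS1
    rw [← Finset.add_sum_erase _ _ hone, Finset.prod_singleton] at hmom
    rw [← Finset.sum_filter_add_sum_filter_not ((ncPartitions S).erase {S})
      (fun π => ({m} : Finset ℕ) ∈ π)] at hmom
    have hsum1 : ∑ π ∈ ((ncPartitions S).erase {S}).filter (fun π => ({m} : Finset ℕ) ∈ π),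
        ∏ V ∈ π, κ (blockList (A' i) V) = ω (x i) * ω (P * Q) := by
      rw [sum_nc_singleton_block hm h2 (fun V => κ (blockList (A' i) V))]
      have hbl : blockList (A' i) ({m} : Finset ℕ) = [x i] := by
        rw [blockList_singleton]
        simp [hA']
      have hσeq : ∀ σ ∈ ncPartitions (S.erase m),
          κ (blockList (A' i) {m}) * ∏ V ∈ σ, κ (blockList (A' i) V)
            = ω (x i) * ∏ V ∈ σ, κ (blockList A V) := by
        intro σ hσ
        rw [hbl, kappa_singleton hκ]
        congr 1
        apply Finset.prod_congr rfl
        intro V hV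
        have hsp := (mem_ncPartitions.mp hσ).1
        have : m ∉ V := fun hmV => (Finset.notMem_erase m S) (hsp.1 V hV hmV)
        rw [hA']
        simp only
        rw [blockList_update_of_not_mem this]
      rw [Finset.sum_congr rfl hσeq, ← Finset.mul_sum]
      congr 1
      rw [← hκ A (S.erase m) hSm]
      rw [blockProd_erase, ← hP, ← hQ]
    rw [hsum1] at hmom
    have hbp : ω (blockProd (A' i) S) = ω (P * x i * Q) := by
      rw [hA']
      simp only
      rw [blockProd_split_update hm]
    rw [hbp] at hmom
    linear_combination -hmom
  have hsum2 : Filter.Tendsto (fun i => ∑ π ∈ T₂, ∏ V ∈ π, κ (blockList (A' i) V)) l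
      (𝓝 (∑ π ∈ T₂, (0 : ℂ))) := by
    apply tendsto_finset_sum
    intro π hπ
    obtain ⟨hπe, hms⟩ := Finset.mem_filter.mp hπ
    obtain ⟨hne, hnc⟩ := Finset.mem_erase.mp hπe
    have hsp := (mem_ncPartitions.mp hnc).1
    obtain ⟨Vm, ⟨hVmπ, hmVm⟩, huVm⟩ := hsp.2.2 m hm
    have hVm2 : 2 ≤ Vm.card := by
      by_contra hlt
      have h1 : Vm.card = 1 := by
        have := Finset.card_pos.mpr ⟨m, hmVm⟩
        omega
      obtain ⟨a, ha⟩ := Finset.card_eq_one.mp h1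
      rw [ha, Finset.mem_singleton] at hmVm
      subst hmVm
      exact hms (ha ▸ hVmπ)
    have hss : Vm ⊂ S := Finset.ssubset_iff_subset_ne.mpr
      ⟨hsp.1 Vm hVmπ, block_ne_of_ne_oneBlock hsp hne hVmπ⟩
    have hIH := IH Vm hss hmVm hVm2
    have hkey2 : ∀ i, ∏ V ∈ π, κ (blockList (A' i) V) =
        κ (blockList (A' i) Vm) * ∏ V ∈ π.erase Vm, κ (blockList A V) := by
      intro i
      rw [← Finset.mul_prod_erase π _ hVmπ]
      congr 1
      apply Finset.prod_congr rfl
      intro V hV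
      rw [hA']
      simp only
      rw [blockList_update_of_not_mem (not_mem_of_mem_erase_block hsp hVmπ hmVm hV)]
    have := Filter.Tendsto.mul_const (∏ V ∈ π.erase Vm, κ (blockList A V)) hIH
    rw [zero_mul] at this
    exact Filter.Tendsto.congr (fun i => (hkey2 i).symm) this
  have hfin := Filter.Tendsto.sub (hx P Q) hsum2
  simp only [Finset.sum_const_zero, sub_zero] at hfin
  exact Filter.Tendsto.congr (fun i => (key i).symm) hfin

end FreeMain

section ClassicalAux

/-- The block of `π` containing `m` (junk value if none). -/
def mblockF (m : ℕ) (π : Finset (Finset ℕ)) : Finset ℕ :=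
  (π.filter (fun V => m ∈ V)).sup id

/-- The restriction of `π` to the complement of `m`. -/
def restF (m : ℕ) (π : Finset (Finset ℕ)) : Finset (Finset ℕ) :=
  (π.image (fun V => V.erase m)).erase ∅

lemma mblockF_eq {S : Finset ℕ} {π : Finset (Finset ℕ)} (hπ : IsSetPartition S π)
    {m : ℕ} {V : Finset ℕ} (hV : V ∈ π) (hmV : m ∈ V) : mblockF m π = V := by
  have hfil : π.filter (fun W => m ∈ W) = {V} := by
    ext W
    rw [Finset.mem_filter, Finset.mem_singleton]
    constructor
    · rintro ⟨hW, hmW⟩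
      exact block_eq_block hπ hW hV hmW hmV
    · rintro rfl
      exact ⟨hV, hmV⟩
  unfold mblockF
  rw [hfil, Finset.sup_singleton]
  rfl

lemma exists_ne_of_ne_singleton {B : Finset ℕ} {m : ℕ} (hmB : m ∈ B) (hne : B ≠ {m}) :
    (B.erase m).Nonempty := by
  rcases Finset.eq_empty_or_nonempty (B.erase m) with h | h
  · exfalso
    apply hne
    apply Finset.eq_singleton_iff_unique_mem.mpr
    refine ⟨hmB, fun a ha => ?_⟩
    by_contra ham
    exact absurd (Finset.mem_erase.mpr ⟨ham, ha⟩) (h ▸ Finset.notMem_empty a)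
  · exact h

lemma erase_block_not_mem {S : Finset ℕ} {π : Finset (Finset ℕ)} (hπ : IsSetPartition S π)
    {m : ℕ} {B : Finset ℕ} (hB : B ∈ π) (hmB : m ∈ B) (hne : B ≠ {m}) :
    B.erase m ∉ π := by
  intro hmem
  obtain ⟨a, ha⟩ := exists_ne_of_ne_singleton hmB hne
  obtain ⟨ham, haB⟩ := Finset.mem_erase.mp ha
  have heq := block_eq_block hπ hmem hB ha haB
  rw [← heq] at hmB
  exact (Finset.mem_erase.mp hmB).1 rfl

lemma restF_eq_of_singleton {S : Finset ℕ} {π : Finset (Finset ℕ)} (hπ : IsSetPartition S π)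
    {m : ℕ} (hmem : ({m} : Finset ℕ) ∈ π) : restF m π = π.erase {m} := by
  have himg : π.image (fun V => V.erase m) = insert ∅ (π.erase {m}) := by
    ext W
    rw [Finset.mem_image, Finset.mem_insert, Finset.mem_erase]
    constructor
    · rintro ⟨V, hV, rfl⟩
      by_cases hVm : V = {m}
      · subst hVm
        left
        simp
      · have hmV : m ∉ V := fun h => hVm (block_eq_block hπ hV hmem h (Finset.mem_singleton_self m))
        right
        rw [Finset.erase_eq_of_notMem hmV]
        exact ⟨hVm, hV⟩
    · rintro (rfl | ⟨hne, hW⟩)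
      · exact ⟨{m}, hmem, by simp⟩
      · have hmW : m ∉ W := fun h => hne (block_eq_block hπ hW hmem h (Finset.mem_singleton_self m))
        exact ⟨W, hW, Finset.erase_eq_of_notMem hmW⟩
  unfold restF
  rw [himg, Finset.erase_insert]
  intro h
  obtain ⟨hne, hmem'⟩ := Finset.mem_erase.mp h
  exact absurd (hπ.2.1 ∅ hmem') (by simp)

lemma restF_eq_of_ne_singleton {S : Finset ℕ} {π : Finset (Finset ℕ)} (hπ : IsSetPartition S π)
    {m : ℕ} {B : Finset ℕ} (hB : B ∈ π) (hmB : m ∈ B) (hne : B ≠ {m}) :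
    restF m π = insert (B.erase m) (π.erase B) := by
  have himg : π.image (fun V => V.erase m) = insert (B.erase m) (π.erase B) := by
    ext W
    rw [Finset.mem_image, Finset.mem_insert, Finset.mem_erase]
    constructor
    · rintro ⟨V, hV, rfl⟩
      by_cases hVB : V = B
      · subst hVB; exact Or.inl rfl
      · have hmV : m ∉ V := fun h => hVB (block_eq_block hπ hV hB h hmB)
        right
        rw [Finset.erase_eq_of_notMem hmV]
        exact ⟨hVB, hV⟩
    · rintro (rfl | ⟨hWB, hW⟩)
      · exact ⟨B, hB, rfl⟩
      · have hmW : m ∉ W := fun h => hWB (block_eq_block hπ hW hB h hmB)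
        exact ⟨W, hW, Finset.erase_eq_of_notMem hmW⟩
  unfold restF
  rw [himg]
  apply Finset.erase_eq_of_notMem
  intro h
  rcases Finset.mem_insert.mp h with h' | h'
  · exact absurd h'.symm (Finset.nonempty_iff_ne_empty.mp (exists_ne_of_ne_singleton hmB hne))
  · exact absurd (hπ.2.1 ∅ (Finset.mem_of_mem_erase h')) (by simp)

lemma restF_partition {S : Finset ℕ} {π : Finset (Finset ℕ)} (hπ : IsSetPartition S π)
    {m : ℕ} {B : Finset ℕ} (hB : B ∈ π) (hmB : m ∈ B) (hne : B ≠ {m}) :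
    IsSetPartition (S.erase m) (insert (B.erase m) (π.erase B)) := by
  have hmnot : ∀ V ∈ π.erase B, m ∉ V :=
    fun V hV => not_mem_of_mem_erase_block hπ hB hmB hV
  refine ⟨?_, ?_, ?_⟩
  · intro V hV
    rcases Finset.mem_insert.mp hV with rfl | hV'
    · intro a ha
      obtain ⟨ham, haB⟩ := Finset.mem_erase.mp ha
      exact Finset.mem_erase.mpr ⟨ham, hπ.1 B hB haB⟩
    · intro a ha
      refine Finset.mem_erase.mpr ⟨?_, hπ.1 V (Finset.mem_of_mem_erase hV') ha⟩
      rintro rfl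
      exact hmnot V hV' ha
  · intro V hV
    rcases Finset.mem_insert.mp hV with rfl | hV'
    · exact exists_ne_of_ne_singleton hmB hne
    · exact hπ.2.1 V (Finset.mem_of_mem_erase hV')
  · intro a ha
    obtain ⟨ham, haS⟩ := Finset.mem_erase.mp ha
    obtain ⟨Va, ⟨hVa, haVa⟩, hu⟩ := hπ.2.2 a haS
    by_cases hVaB : Va = B
    · subst hVaB
      refine ⟨Va.erase m, ⟨Finset.mem_insert_self _ _, Finset.mem_erase.mpr ⟨ham, haVa⟩⟩, ?_⟩
      rintro W ⟨hW, haW⟩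
      rcases Finset.mem_insert.mp hW with rfl | hW'
      · rfl
      · exact absurd (hu W ⟨Finset.mem_of_mem_erase hW', haW⟩)
          (Finset.ne_of_mem_erase hW')
    · refine ⟨Va, ⟨Finset.mem_insert_of_mem (Finset.mem_erase.mpr ⟨hVaB, hVa⟩), haVa⟩, ?_⟩
      rintro W ⟨hW, haW⟩
      rcases Finset.mem_insert.mp hW with rfl | hW'
      · exfalso
        exact hVaB (hu B ⟨hB, Finset.mem_of_mem_erase haW⟩).symm
      · exact hu W ⟨Finset.mem_of_mem_erase hW', haW⟩

lemma insert_block_partition {S : Finset ℕ} {σ : Finset (Finset ℕ)} {m : ℕ} {W : Finset ℕ}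
    (hσ : IsSetPartition (S.erase m) σ) (hm : m ∈ S) (hW : W ∈ σ) :
    IsSetPartition S (insert (insert m W) (σ.erase W)) := by
  have hmnot : ∀ V ∈ σ, m ∉ V := fun V hV hmV => (Finset.notMem_erase m S) (hσ.1 V hV hmV)
  refine ⟨?_, ?_, ?_⟩
  · intro V hV
    rcases Finset.mem_insert.mp hV with rfl | hV'
    · intro a ha
      rcases Finset.mem_insert.mp ha with rfl | ha'
      · exact hm
      · exact Finset.mem_of_mem_erase (hσ.1 W hW ha')
    · exact fun a ha => Finset.mem_of_mem_erase
        (hσ.1 V (Finset.mem_of_mem_erase hV') ha)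
  · intro V hV
    rcases Finset.mem_insert.mp hV with rfl | hV'
    · exact Finset.insert_nonempty m W
    · exact hσ.2.1 V (Finset.mem_of_mem_erase hV')
  · intro a ha
    by_cases ham : a = m
    · subst ham
      refine ⟨insert a W, ⟨Finset.mem_insert_self _ _, Finset.mem_insert_self a W⟩, ?_⟩
      rintro V ⟨hV, haV⟩
      rcases Finset.mem_insert.mp hV with rfl | hV'
      · rfl
      · exact absurd haV (hmnot V (Finset.mem_of_mem_erase hV'))
    · obtain ⟨Va, ⟨hVa, haVa⟩, hu⟩ := hσ.2.2 a (Finset.mem_erase.mpr ⟨ham, ha⟩)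
      by_cases hVaW : Va = W
      · subst hVaW
        refine ⟨insert m Va, ⟨Finset.mem_insert_self _ _, Finset.mem_insert_of_mem haVa⟩, ?_⟩
        rintro V ⟨hV, haV⟩
        rcases Finset.mem_insert.mp hV with rfl | hV'
        · rfl
        · exact absurd (hu V ⟨Finset.mem_of_mem_erase hV', haV⟩)
            (Finset.ne_of_mem_erase hV')
      · refine ⟨Va, ⟨Finset.mem_insert_of_mem (Finset.mem_erase.mpr ⟨hVaW, hVa⟩), haVa⟩, ?_⟩
        rintro V ⟨hV, haV⟩
        rcases Finset.mem_insert.mp hV with rfl | hV'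
        · exfalso
          rcases Finset.mem_insert.mp haV with rfl | haV'
          · exact ham rfl
          · exact hVaW (hu W ⟨hW, haV'⟩).symm
        · exact hu V ⟨Finset.mem_of_mem_erase hV', haV⟩

end ClassicalAux

section KeyZero

lemma coeff_identity (k : ℕ) (hk : 1 ≤ k) :
    (-1 : ℂ) ^ k * (k.factorial : ℂ) +
      (k : ℂ) * ((-1 : ℂ) ^ (k - 1) * ((k - 1).factorial : ℂ)) = 0 := by
  obtain ⟨j, rfl⟩ := Nat.exists_eq_add_of_le hk
  have h1 : 1 + j - 1 = j := by omega
  have h2 : (1 + j).factorial = (1 + j) * j.factorial := by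
    rw [Nat.add_comm 1 j, Nat.factorial_succ]
  rw [h1, h2, Nat.add_comm 1 j, pow_succ]
  push_cast
  ring

lemma key_zero (f : Finset ℕ → ℂ) (hf1 : f ∅ = 1) {S : Finset ℕ} {m : ℕ}
    (hm : m ∈ S) (h2 : 2 ≤ S.card) :
    ∑ π ∈ setPartitions S,
        (-1 : ℂ) ^ (π.card - 1) * ((π.card - 1).factorial : ℂ) * ∏ V ∈ π, f (V.erase m)
      = 0 := by
  classical
  have hSm : (S.erase m).Nonempty := by
    rw [← Finset.card_pos, Finset.card_erase_of_mem hm]; omega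
  set Sg : Finset ((_ : Finset (Finset ℕ)) × Finset ℕ) :=
    (setPartitions (S.erase m)).sigma (fun σ => insert ∅ σ) with hSg
  set gfun : ((_ : Finset (Finset ℕ)) × Finset ℕ) → ℂ := fun p =>
    (if p.2 = ∅ then (-1 : ℂ) ^ p.1.card * (p.1.card.factorial : ℂ)
      else (-1 : ℂ) ^ (p.1.card - 1) * ((p.1.card - 1).factorial : ℂ)) * ∏ V ∈ p.1, f V
    with hgfun
  have hmain : ∑ π ∈ setPartitions S,
      (-1 : ℂ) ^ (π.card - 1) * ((π.card - 1).factorial : ℂ) * ∏ V ∈ π, f (V.erase m)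
      = ∑ p ∈ Sg, gfun p := by
    refine Finset.sum_nbij' (fun π => ⟨restF m π, (mblockF m π).erase m⟩)
      (fun p => if p.2 = ∅ then insert {m} p.1 else insert (insert m p.2) (p.1.erase p.2))
      ?_ ?_ ?_ ?_ ?_
    · -- forward map lands in Sg
      intro π hπ
      have hsp := mem_setPartitions.mp hπ
      obtain ⟨B, ⟨hB, hmB⟩, _⟩ := hsp.2.2 m hm
      have hmb : mblockF m π = B := mblockF_eq hsp hB hmB
      rw [Finset.mem_sigma]
      by_cases hBm : B = {m}
      · subst hBm
        rw [hmb]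
        constructor
        · rw [restF_eq_of_singleton hsp hB]
          exact mem_setPartitions.mpr (erase_singleton_partition hsp hB)
        · simp
      · rw [hmb]
        constructor
        · rw [restF_eq_of_ne_singleton hsp hB hmB hBm]
          exact mem_setPartitions.mpr (restF_partition hsp hB hmB hBm)
        · rw [restF_eq_of_ne_singleton hsp hB hmB hBm]
          exact Finset.mem_insert_of_mem (Finset.mem_insert_self _ _)
    · -- backward map lands in setPartitions S
      rintro ⟨σ, W⟩ hp
      dsimp only
      rw [Finset.mem_sigma] at hp
      obtain ⟨hσ, hWmem⟩ := hp
      have hspσ := mem_setPartitions.mp hσ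
      by_cases hW : W = ∅
      · subst hW
        rw [if_pos rfl]
        exact mem_setPartitions.mpr (insert_singleton_partition hspσ hm)
      · have hWσ : W ∈ σ := by
          rcases Finset.mem_insert.mp hWmem with rfl | h
          · exact absurd rfl hW
          · exact h
        rw [if_neg hW]
        exact mem_setPartitions.mpr (insert_block_partition hspσ hm hWσ)
    · -- left inverse
      intro π hπ
      dsimp only
      have hsp := mem_setPartitions.mp hπ
      obtain ⟨B, ⟨hB, hmB⟩, _⟩ := hsp.2.2 m hm
      have hmb : mblockF m π = B := mblockF_eq hsp hB hmB
      simp only [hmb]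
      by_cases hBm : B = {m}
      · subst hBm
        rw [if_pos (by simp), restF_eq_of_singleton hsp hB, Finset.insert_erase hB]
      · have hne : B.erase m ≠ ∅ :=
          Finset.nonempty_iff_ne_empty.mp (exists_ne_of_ne_singleton hmB hBm)
        rw [if_neg hne, restF_eq_of_ne_singleton hsp hB hmB hBm,
          Finset.erase_insert (fun h => erase_block_not_mem hsp hB hmB hBm
            (Finset.mem_of_mem_erase h)),
          Finset.insert_erase hmB, Finset.insert_erase hB]
    · -- right inverse
      rintro ⟨σ, W⟩ hp
      dsimp only
      rw [Finset.mem_sigma] at hp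
      dsimp only at hp
      obtain ⟨hσ, hWmem⟩ := hp
      have hspσ := mem_setPartitions.mp hσ
      have hmnot : ∀ V ∈ σ, m ∉ V := fun V hV hmV =>
        (Finset.notMem_erase m S) (hspσ.1 V hV hmV)
      by_cases hW : W = ∅
      · subst hW
        rw [if_pos rfl]
        have hsp' := insert_singleton_partition hspσ hm
        have hmb : mblockF m (insert {m} σ) = {m} :=
          mblockF_eq hsp' (Finset.mem_insert_self _ _) (Finset.mem_singleton_self m)
        have hrest : restF m (insert {m} σ) = σ := by
          rw [restF_eq_of_singleton hsp' (Finset.mem_insert_self _ _),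
            Finset.erase_insert (singleton_not_mem hspσ)]
        rw [hmb, hrest]
        simp
      · have hWσ : W ∈ σ := by
          rcases Finset.mem_insert.mp hWmem with rfl | h
          · exact absurd rfl hW
          · exact h
        have hmW : m ∉ W := hmnot W hWσ
        rw [if_neg hW]
        have hsp' := insert_block_partition hspσ hm hWσ
        have hmb : mblockF m (insert (insert m W) (σ.erase W)) = insert m W :=
          mblockF_eq hsp' (Finset.mem_insert_self _ _) (Finset.mem_insert_self m W)
        have hBne : insert m W ≠ ({m} : Finset ℕ) := by
          intro h
          obtain ⟨a, ha⟩ := Finset.nonempty_iff_ne_empty.mpr hW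
          have ham : a ∈ ({m} : Finset ℕ) := h ▸ Finset.mem_insert_of_mem ha
          rw [Finset.mem_singleton] at ham
          subst ham
          exact hmW ha
        have hrest : restF m (insert (insert m W) (σ.erase W)) = σ := by
          rw [restF_eq_of_ne_singleton hsp' (Finset.mem_insert_self _ _)
              (Finset.mem_insert_self m W) hBne,
            Finset.erase_insert hmW,
            Finset.erase_insert
              (fun h => hmnot _ (Finset.mem_of_mem_erase h) (Finset.mem_insert_self m W)),
            Finset.insert_erase hWσ]
        rw [hmb, hrest, Finset.erase_insert hmW]
    · -- value equality
      intro π hπ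
      have hsp := mem_setPartitions.mp hπ
      obtain ⟨B, ⟨hB, hmB⟩, _⟩ := hsp.2.2 m hm
      have hmb : mblockF m π = B := mblockF_eq hsp hB hmB
      have hπcard : 1 ≤ π.card := Finset.card_pos.mpr ⟨B, hB⟩
      simp only [hgfun, hmb]
      by_cases hBm : B = {m}
      · subst hBm
        rw [restF_eq_of_singleton hsp hB]
        have hc : (π.erase {m}).card = π.card - 1 := Finset.card_erase_of_mem hB
        rw [if_pos (by simp), hc]
        congr 1
        rw [← Finset.mul_prod_erase π (fun V => f (V.erase m)) hB]
        simp only [Finset.erase_singleton, hf1, one_mul]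
        apply Finset.prod_congr rfl
        intro V hV
        rw [Finset.erase_eq_of_notMem (not_mem_of_mem_erase_block hsp hB hmB hV)]
      · have hne : B.erase m ≠ ∅ :=
          Finset.nonempty_iff_ne_empty.mp (exists_ne_of_ne_singleton hmB hBm)
        rw [restF_eq_of_ne_singleton hsp hB hmB hBm, if_neg hne]
        have hnotmem : B.erase m ∉ π.erase B := fun h =>
          erase_block_not_mem hsp hB hmB hBm (Finset.mem_of_mem_erase h)
        have hc : (insert (B.erase m) (π.erase B)).card = π.card := by
          rw [Finset.card_insert_of_notMem hnotmem, Finset.card_erase_of_mem hB]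
          omega
        rw [hc]
        congr 1
        rw [Finset.prod_insert hnotmem, ← Finset.mul_prod_erase π (fun V => f (V.erase m)) hB]
        congr 1
        apply Finset.prod_congr rfl
        intro V hV
        rw [Finset.erase_eq_of_notMem (not_mem_of_mem_erase_block hsp hB hmB hV)]
  rw [hmain, hSg, Finset.sum_sigma]
  apply Finset.sum_eq_zero
  intro σ hσ
  have hspσ := mem_setPartitions.mp hσ
  have hk : 1 ≤ σ.card := card_pos_of_partition hspσ hSm
  have hnot : (∅ : Finset ℕ) ∉ σ := fun h => absurd (hspσ.2.1 ∅ h) (by simp)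
  rw [Finset.sum_insert hnot]
  have hconst : ∀ W ∈ σ, gfun ⟨σ, W⟩ =
      (-1 : ℂ) ^ (σ.card - 1) * ((σ.card - 1).factorial : ℂ) * ∏ V ∈ σ, f V := by
    intro W hW
    have : W ≠ ∅ := Finset.nonempty_iff_ne_empty.mp (hspσ.2.1 W hW)
    simp only [hgfun, if_neg this]
  rw [Finset.sum_congr rfl hconst, Finset.sum_const, hgfun]
  simp only [if_pos rfl]
  rw [nsmul_eq_mul]
  have := coeff_identity σ.card hk
  calc (-1 : ℂ) ^ σ.card * (σ.card.factorial : ℂ) * ∏ V ∈ σ, f V +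
        (σ.card : ℂ) * ((-1 : ℂ) ^ (σ.card - 1) * ((σ.card - 1).factorial : ℂ) * ∏ V ∈ σ, f V)
      = ((-1 : ℂ) ^ σ.card * (σ.card.factorial : ℂ) +
          (σ.card : ℂ) * ((-1 : ℂ) ^ (σ.card - 1) * ((σ.card - 1).factorial : ℂ))) *
          ∏ V ∈ σ, f V := by ring
    _ = 0 := by rw [this, zero_mul]

end KeyZero

section ClassicalMain

variable {𝔘 ι : Type*}

lemma blockProd_empty [Monoid 𝔘] (A : ℕ → 𝔘) : blockProd A (∅ : Finset ℕ) = 1 := by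
  unfold blockProd blockList
  rw [Finset.sort_empty]
  rfl

lemma classical_main [Monoid 𝔘] (ω : 𝔘 → ℂ) (hω1 : ω 1 = 1) (l : Filter ι)
    (A : ℕ → 𝔘) (m : ℕ) (x : ι → 𝔘)
    (hx : ∀ P Q : 𝔘, Filter.Tendsto
      (fun i => ω (P * x i * Q) - ω (x i) * ω (P * Q)) l (𝓝 0))
    {S : Finset ℕ} (hm : m ∈ S) (h2 : 2 ≤ S.card) :
    Filter.Tendsto (fun i => cumulant ω (Function.update A m (x i)) S) l (𝓝 0) := by
  classical
  set A' : ι → ℕ → 𝔘 := fun i => Function.update A m (x i) with hA'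
  have hfe : ω (blockProd A (∅ : Finset ℕ)) = 1 := by rw [blockProd_empty]; exact hω1
  have hzero := key_zero (fun V => ω (blockProd A V)) hfe hm h2
  have hterm : ∀ π ∈ setPartitions S, Filter.Tendsto
      (fun i => (-1 : ℂ) ^ (π.card - 1) * ((π.card - 1).factorial : ℂ) *
          ∏ V ∈ π, ω (blockProd (A' i) V)
        - (-1 : ℂ) ^ (π.card - 1) * ((π.card - 1).factorial : ℂ) *
          (ω (x i) * ∏ V ∈ π, ω (blockProd A (V.erase m)))) l (𝓝 0) := by
    intro π hπ
    have hsp := mem_setPartitions.mp hπ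
    obtain ⟨Vm, ⟨hVm, hmVm⟩, _⟩ := hsp.2.2 m hm
    set P := blockProd A (Vm.filter (· < m)) with hP
    set Q := blockProd A (Vm.filter (m < ·)) with hQ
    set C := ∏ V ∈ π.erase Vm, ω (blockProd A V) with hC
    have hprod1 : ∀ i, ∏ V ∈ π, ω (blockProd (A' i) V) = ω (P * x i * Q) * C := by
      intro i
      rw [← Finset.mul_prod_erase π _ hVm]
      congr 1
      · rw [hA']
        simp only
        rw [blockProd_split_update hmVm]
      · apply Finset.prod_congr rfl
        intro V hV
        rw [hA']
        simp only
        rw [blockProd_update_of_not_mem (not_mem_of_mem_erase_block hsp hVm hmVm hV)]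
    have hprod2 : ∏ V ∈ π, ω (blockProd A (V.erase m)) = ω (P * Q) * C := by
      rw [← Finset.mul_prod_erase π _ hVm]
      congr 1
      · rw [blockProd_erase]
      · apply Finset.prod_congr rfl
        intro V hV
        rw [Finset.erase_eq_of_notMem (not_mem_of_mem_erase_block hsp hVm hmVm hV)]
    have hkey : ∀ i,
        (-1 : ℂ) ^ (π.card - 1) * ((π.card - 1).factorial : ℂ) *
            ∏ V ∈ π, ω (blockProd (A' i) V)
          - (-1 : ℂ) ^ (π.card - 1) * ((π.card - 1).factorial : ℂ) *
            (ω (x i) * ∏ V ∈ π, ω (blockProd A (V.erase m)))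
        = ((-1 : ℂ) ^ (π.card - 1) * ((π.card - 1).factorial : ℂ) * C) *
            (ω (P * x i * Q) - ω (x i) * ω (P * Q)) := by
      intro i
      rw [hprod1 i, hprod2]
      ring
    have := Filter.Tendsto.const_mul
      ((-1 : ℂ) ^ (π.card - 1) * ((π.card - 1).factorial : ℂ) * C) (hx P Q)
    rw [mul_zero] at this
    exact Filter.Tendsto.congr (fun i => (hkey i).symm) this
  have hsum := tendsto_finset_sum (setPartitions S) hterm
  simp only [Finset.sum_const_zero] at hsum
  have heq : ∀ i, ∑ π ∈ setPartitions S,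
      ((-1 : ℂ) ^ (π.card - 1) * ((π.card - 1).factorial : ℂ) *
          ∏ V ∈ π, ω (blockProd (A' i) V)
        - (-1 : ℂ) ^ (π.card - 1) * ((π.card - 1).factorial : ℂ) *
          (ω (x i) * ∏ V ∈ π, ω (blockProd A (V.erase m))))
      = cumulant ω (A' i) S := by
    intro i
    rw [Finset.sum_sub_distrib]
    have h3 : ∑ π ∈ setPartitions S,
        (-1 : ℂ) ^ (π.card - 1) * ((π.card - 1).factorial : ℂ) *
          (ω (x i) * ∏ V ∈ π, ω (blockProd A (V.erase m)))
        = ω (x i) * ∑ π ∈ setPartitions S,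
            (-1 : ℂ) ^ (π.card - 1) * ((π.card - 1).factorial : ℂ) *
              ∏ V ∈ π, ω (blockProd A (V.erase m)) := by
      rw [Finset.mul_sum]
      apply Finset.sum_congr rfl
      intro π hπ
      ring
    rw [h3, hzero, mul_zero, sub_zero]
    rfl
  exact Filter.Tendsto.congr heq hsum

end ClassicalMain

/-- two-sided clustering together with the three-element clustering property
imply that the n-th free and classical cumulants vanish when any single argument (in any
position m) is translated along the net. -/
theorem cumulant_clustering_any_position {G ι : Type*} [Group G] [TopologicalSpace G] [IsTopologicalGroup G]
    [LocallyCompactSpace G]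
    [NormedRing 𝔘] [StarRing 𝔘] [CStarRing 𝔘] [NormedAlgebra ℂ 𝔘] [StarModule ℂ 𝔘]
    [CompleteSpace 𝔘]
    (α : G → 𝔘 ≃⋆ₐ[ℂ] 𝔘) (hα : IsStarAutoRep α)
    (ω : 𝔘 →ₗ[ℂ] ℂ) (hω : IsState ω)
    (l : Filter ι) (g : ι → G)
    (κ : List 𝔘 → ℂ) (hκ : IsFreeCumulantFamily ⇑ω κ)
    (hcl : ∀ A B : 𝔘, Filter.Tendsto
      (fun i => ω (α (g i) A * B) - ω (α (g i) A) * ω B) l (𝓝 0))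
    (hcl3 : ∀ A B C : 𝔘, Filter.Tendsto
      (fun i => ω (A * α (g i) B * C) - ω (α (g i) B) * ω (A * C)) l (𝓝 0)) :
    ∀ n, 2 ≤ n → ∀ m, 1 ≤ m → m ≤ n → ∀ A : ℕ → 𝔘,
      Filter.Tendsto
        (fun i => κ (blockList (Function.update A m (α (g i) (A m))) (Finset.Icc 1 n)))
        l (𝓝 0) ∧
      Filter.Tendsto
        (fun i => cumulant ⇑ω (Function.update A m (α (g i) (A m))) (Finset.Icc 1 n))
        l (𝓝 0) := by
  intro n hn m hm1 hm2 A
  have hmS : m ∈ Finset.Icc 1 n := Finset.mem_Icc.mpr ⟨hm1, hm2⟩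
  have hcard : 2 ≤ (Finset.Icc 1 n).card := by
    rw [Nat.card_Icc]
    omega
  constructor
  · exact free_main ⇑ω l κ hκ A m (fun i => α (g i) (A m))
      (fun P Q => hcl3 P (A m) Q) _ hmS hcard
  · exact classical_main ⇑ω hω.unital l A m (fun i => α (g i) (A m))
      (fun P Q => hcl3 P (A m) Q) hmS hcard
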